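/- Let F be a Borel probability measure on ℝ and ξ¹, ξ², … i.i.d. draws from F; for each N let ξ_(1) ≤ ⋯ ≤ ξ_(N) denote the first N data points sorted in nondecreasing order. For a Borel probability measure G on ℝ with cumulative distribution function G(t) = G((−∞,t]), define the Kolmogorov–Smirnov statistic D_N(G) = max_{1≤i≤N} max( i/N − G(ξ_(i)), G(ξ_(i)) − (i−1)/N ) and the Kuiper statistic V_N(G) = max_{1≤i≤N}( G(ξ_(i)) − (i−1)/N ) + max_{1≤i≤N}( i/N − G(ξ_(i)) ). Let (Q_N) be positive reals with Q_N → 0. Then almost surely: every sequence (G_N) of Borel probability measures on ℝ with D_N(G_N) ≤ Q_N for all but finitely many N converges weakly to F; the same conclusion holds with V_N in place of D_N. That is, the Kolmogorov–Smirnov and Kuiper goodness-of-fit tests are uniformly consistent. -/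

import Mathlib

open MeasureTheory Filter Topology
open scoped ENNReal

/-- The cumulative distribution function of a Borel probability measure on `ℝ`. -/
noncomputable def cdfOf (G : ProbabilityMeasure ℝ) (t : ℝ) : ℝ :=
  (G.toMeasure (Set.Iic t)).toReal

section Aux

open Set ProbabilityTheory
open scoped NNReal

lemma cdfOf_nonneg (G : ProbabilityMeasure ℝ) (t : ℝ) : 0 ≤ cdfOf G t := ENNReal.toReal_nonneg

lemma cdfOf_le_one (G : ProbabilityMeasure ℝ) (t : ℝ) : cdfOf G t ≤ 1 := by
  have h := measure_mono (Set.subset_univ (Set.Iic t)) (μ := G.toMeasure)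
  simpa [cdfOf, measure_univ] using ENNReal.toReal_mono (by simp) h

lemma cdfOf_mono (G : ProbabilityMeasure ℝ) {s t : ℝ} (h : s ≤ t) : cdfOf G s ≤ cdfOf G t :=
  ENNReal.toReal_mono (measure_ne_top _ _) (measure_mono (Set.Iic_subset_Iic.2 h))

lemma cdfOf_Ioc (G : ProbabilityMeasure ℝ) {a b : ℝ} (h : a ≤ b) :
    (G.toMeasure (Set.Ioc a b)).toReal = cdfOf G b - cdfOf G a := by
  have : G.toMeasure (Set.Iic a) + G.toMeasure (Set.Ioc a b) = G.toMeasure (Set.Iic b) := by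
    rw [← measure_union (Set.Iic_disjoint_Ioc le_rfl) measurableSet_Ioc,
      Set.Iic_union_Ioc_eq_Iic h]
  have ha := measure_ne_top G.toMeasure (Set.Iic a)
  have hb := measure_ne_top G.toMeasure (Set.Ioc a b)
  rw [cdfOf, cdfOf, ← this, ENNReal.toReal_add ha hb]
  ring

lemma compact_le_liminf (F : ProbabilityMeasure ℝ) (G : ℕ → ProbabilityMeasure ℝ)
    (h : ∀ q : ℚ, Tendsto (fun N => cdfOf (G N) q) atTop (𝓝 (cdfOf F q)))
    {U K : Set ℝ} (hU : IsOpen U) (hK : IsCompact K) (hKU : K ⊆ U) :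
    (F.toMeasure K).toReal ≤ atTop.liminf (fun i => ((G i U : ℝ≥0) : ℝ)) := by
  obtain ⟨δ, hδ0, hthick⟩ := hK.exists_thickening_subset_open hU hKU
  obtain ⟨δq, hδq0, hδqδ⟩ := exists_rat_btwn hδ0
  rw [Rat.cast_pos] at hδq0
  obtain ⟨M, hM⟩ := hK.isBounded.subset_closedBall 0
  obtain ⟨a0, ha0⟩ := exists_rat_lt (-M)
  set aq : ℕ → ℚ := fun j => a0 + j * δq with haq
  have haqmono : ∀ {i j : ℕ}, i ≤ j → (aq i : ℝ) ≤ aq j := by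
    intro i j hij
    have : (i:ℝ) ≤ j := by exact_mod_cast hij
    push_cast [haq]
    nlinarith [(by exact_mod_cast hδq0 : (0:ℝ) < (δq:ℝ))]
  have hgap : ∀ j : ℕ, (aq (j+1) : ℝ) - aq j = δq := by
    intro j; push_cast [haq]; ring
  set J := ⌈(M - (a0:ℝ)) / (δq:ℝ)⌉₊ with hJ
  set I : ℕ → Set ℝ := fun j => Ioc (aq j : ℝ) (aq (j+1) : ℝ) with hI
  classical
  set S := (Finset.range J).filter (fun j => (I j ∩ K).Nonempty) with hS
  have hδqR : (0:ℝ) < (δq:ℝ) := by exact_mod_cast hδq0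
  -- the selected intervals cover K
  have hcover : K ⊆ ⋃ j ∈ S, I j := by
    intro x hx
    have hxM : |x| ≤ M := by
      have := hM hx
      rwa [Metric.mem_closedBall, Real.dist_eq, sub_zero] at this
    rw [abs_le] at hxM
    have hax : (a0:ℝ) < x := lt_of_lt_of_le ha0 hxM.1
    set r : ℝ := (x - a0) / δq with hr
    have hr0 : 0 < r := div_pos (by linarith) hδqR
    set j' := ⌈r⌉₊ with hj'
    have hj'pos : 0 < j' := Nat.ceil_pos.2 hr0
    have hmem : x ∈ I (j' - 1) := by
      constructor
      · have h1 : ((j' - 1 : ℕ) : ℝ) < r := Nat.lt_ceil.1 (by omega)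
        have : ((j' - 1 : ℕ) : ℝ) * δq < x - a0 := by
          rw [hr] at h1
          calc ((j' - 1 : ℕ) : ℝ) * δq < ((x - a0) / δq) * δq := by
                exact mul_lt_mul_of_pos_right h1 hδqR
            _ = x - a0 := by field_simp
        show (aq (j'-1) : ℝ) < x
        push_cast [haq]; linarith
      · have h2 : r ≤ (j' : ℝ) := Nat.le_ceil r
        have : x - a0 ≤ (j' : ℝ) * δq := by
          rw [hr] at h2
          calc x - a0 = ((x - a0) / δq) * δq := by field_simp
            _ ≤ (j' : ℝ) * δq := mul_le_mul_of_nonneg_right h2 hδqR.le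
        show x ≤ (aq (j'-1+1) : ℝ)
        have hj'' : j' - 1 + 1 = j' := by omega
        rw [hj'']
        push_cast [haq]; linarith
    have hjJ : j' - 1 < J := by
      have : j' ≤ J := by
        rw [hj', hJ]
        exact Nat.ceil_le_ceil (by rw [hr]; gcongr <;> linarith)
      omega
    exact Set.mem_biUnion (Finset.mem_filter.2 ⟨Finset.mem_range.2 hjJ, ⟨x, hmem, hx⟩⟩) hmem
  -- each selected interval is inside U
  have hIU : ∀ j ∈ S, I j ⊆ U := by
    intro j hj y hy
    obtain ⟨x, hxI, hxK⟩ := (Finset.mem_filter.1 hj).2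
    apply hthick
    rw [Metric.mem_thickening_iff]
    refine ⟨x, hxK, ?_⟩
    rw [Real.dist_eq]
    have hg := hgap j
    have h1 := hy.1; have h2 := hy.2
    have h3 := hxI.1; have h4 := hxI.2
    rw [abs_sub_lt_iff]
    constructor <;> linarith
  -- disjointness
  have hdisj : (↑S : Set ℕ).PairwiseDisjoint I := by
    intro i hi j hj hij
    simp only [hI, Function.onFun]
    apply Set.Ioc_disjoint_Ioc.2
    rcases lt_or_gt_of_ne hij with hlt | hlt
    · exact le_trans (min_le_left _ _) (le_trans (haqmono (by omega)) (le_max_right _ _))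
    · exact le_trans (min_le_right _ _) (le_trans (haqmono (by omega)) (le_max_left _ _))
  -- sums
  have hmeasI : ∀ j ∈ S, MeasurableSet (I j) := fun j _ => measurableSet_Ioc
  set B : ℝ := ∑ j ∈ S, (cdfOf F (aq (j+1)) - cdfOf F (aq j)) with hB
  have hFK : (F.toMeasure K).toReal ≤ B := by
    have h1 : F.toMeasure K ≤ F.toMeasure (⋃ j ∈ S, I j) := measure_mono hcover
    have h2 : F.toMeasure (⋃ j ∈ S, I j) = ∑ j ∈ S, F.toMeasure (I j) :=
      measure_biUnion_finset hdisj hmeasI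
    have h3 : (F.toMeasure K).toReal ≤ (∑ j ∈ S, F.toMeasure (I j)).toReal := by
      refine ENNReal.toReal_mono ?_ (h2 ▸ h1)
      exact (ENNReal.sum_lt_top.2 fun j _ => measure_lt_top _ _).ne
    refine h3.trans (le_of_eq ?_)
    rw [ENNReal.toReal_sum (fun j _ => measure_ne_top _ _), hB]
    exact Finset.sum_congr rfl fun j _ => cdfOf_Ioc F (haqmono (Nat.le_succ j))
  -- the approximating sums and their limit
  set s : ℕ → ℝ := fun N => ∑ j ∈ S, (cdfOf (G N) (aq (j+1)) - cdfOf (G N) (aq j)) with hs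
  have hto : Tendsto s atTop (𝓝 B) := by
    rw [hB, hs]
    exact tendsto_finset_sum _ fun j _ => (h (aq (j+1))).sub (h (aq j))
  have hle : ∀ N, s N ≤ ((G N U : ℝ≥0) : ℝ) := by
    intro N
    have h2 : (G N).toMeasure (⋃ j ∈ S, I j) = ∑ j ∈ S, (G N).toMeasure (I j) :=
      measure_biUnion_finset hdisj hmeasI
    have h4 : s N = ((G N).toMeasure (⋃ j ∈ S, I j)).toReal := by
      rw [h2, ENNReal.toReal_sum (fun j _ => measure_ne_top _ _), hs]
      exact (Finset.sum_congr rfl fun j _ => (cdfOf_Ioc (G N) (haqmono (Nat.le_succ j))).symm)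
    have h5 : ((G N).toMeasure (⋃ j ∈ S, I j)).toReal ≤ ((G N).toMeasure U).toReal :=
      ENNReal.toReal_mono (measure_ne_top _ _) (measure_mono (Set.iUnion₂_subset hIU))
    rw [h4]
    exact h5.trans (le_of_eq rfl)
  have hliminf : B ≤ atTop.liminf (fun i => ((G i U : ℝ≥0) : ℝ)) := by
    rw [← hto.liminf_eq]
    refine liminf_le_liminf (Eventually.of_forall hle) ?_ ?_
    · exact hto.isBoundedUnder_ge
    · exact IsBoundedUnder.isCoboundedUnder_ge
        ⟨1, eventually_map.2 (by
          filter_upwards with i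
          exact_mod_cast ProbabilityMeasure.apply_le_one _ _)⟩
  exact hFK.trans hliminf

/-- Pointwise convergence of CDFs at all rationals implies convergence in distribution. -/
lemma tendsto_of_cdf_rat (F : ProbabilityMeasure ℝ) (G : ℕ → ProbabilityMeasure ℝ)
    (h : ∀ q : ℚ, Tendsto (fun N => cdfOf (G N) q) atTop (𝓝 (cdfOf F q))) :
    Tendsto G atTop (𝓝 F) := by
  apply tendsto_of_forall_isOpen_le_liminf
  intro U hU
  set L : ℝ≥0 := atTop.liminf (fun i => G i U) with hL
  have lim_eq : (L : ℝ) = atTop.liminf (fun i => ((G i U : ℝ≥0) : ℝ)) := by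
    refine Monotone.map_liminf_of_continuousAt NNReal.coe_mono (fun i => G i U)
      NNReal.continuous_coe.continuousAt ?_ ?_
    · exact IsBoundedUnder.isCoboundedUnder_ge
        ⟨1, eventually_map.2 (by filter_upwards with i using ProbabilityMeasure.apply_le_one _ _)⟩
    · exact ⟨0, eventually_map.2 (by filter_upwards with i using bot_le)⟩
  rw [← NNReal.coe_le_coe, lim_eq]
  have hlim0 : 0 ≤ atTop.liminf (fun i => ((G i U : ℝ≥0) : ℝ)) := by
    rw [← lim_eq]; exact NNReal.coe_nonneg L
  have hcoe : ((F U : ℝ≥0) : ℝ) = (F.toMeasure U).toReal := rfl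
  refine le_of_forall_pos_le_add ?_
  intro ε hε
  by_cases hcase : (F.toMeasure U).toReal ≤ ε
  · rw [hcoe]; linarith
  · push_neg at hcase
    have hd0 : 0 < (F.toMeasure U).toReal - ε := by linarith
    have hr : ENNReal.ofReal ((F.toMeasure U).toReal - ε) < F.toMeasure U := by
      conv_rhs => rw [← ENNReal.ofReal_toReal (measure_ne_top F.toMeasure U)]
      exact ENNReal.ofReal_lt_ofReal_iff_of_nonneg hd0.le |>.2 (by linarith)
    obtain ⟨K, hKU, hKc, hrK⟩ := hU.exists_lt_isCompact hr
    have h1 : (F.toMeasure U).toReal - ε < (F.toMeasure K).toReal := by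
      have := ENNReal.toReal_lt_toReal (by simp) (measure_ne_top F.toMeasure K) |>.2 hrK
      rwa [ENNReal.toReal_ofReal hd0.le] at this
    have h2 := compact_le_liminf F G h hU hKc hKU
    rw [hcoe]; linarith

lemma count_iff {N : ℕ} (x s : Fin N → ℝ) (hmono : Monotone s) (σ : Equiv.Perm (Fin N))
    (hσ : ∀ i, s i = x (σ i)) (t : ℝ) (i : Fin N) :
    s i ≤ t ↔ (i : ℕ) < (Finset.univ.filter (fun k => x k ≤ t)).card := by
  classical
  set A := Finset.univ.filter (fun i : Fin N => s i ≤ t) with hA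
  have hmem : ∀ j : Fin N, j ∈ A ↔ s j ≤ t := by
    intro j; simp [hA]
  have hcard : A.card = (Finset.univ.filter (fun k => x k ≤ t)).card := by
    apply Finset.card_bij (fun i _ => σ i)
    · intro a ha
      simp only [Finset.mem_filter, Finset.mem_univ, true_and]
      rw [← hσ a]
      exact (hmem a).1 ha
    · intro a _ b _ hab
      exact σ.injective hab
    · intro b hb
      refine ⟨σ.symm b, ?_, by simp⟩
      rw [hmem, hσ, Equiv.apply_symm_apply]
      simpa using hb
  have hdc : ∀ {i j : Fin N}, j ≤ i → i ∈ A → j ∈ A := by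
    intro i j hji hi
    rw [hmem] at hi ⊢
    exact le_trans (hmono hji) hi
  rw [← hcard, ← hmem]
  constructor
  · intro hi
    have hsub : Finset.Iic i ⊆ A := fun j hj => hdc (Finset.mem_Iic.1 hj) hi
    have := Finset.card_le_card hsub
    rw [Fin.card_Iic] at this
    omega
  · intro hlt
    by_contra hi
    have hsub : A ⊆ Finset.Iio i := by
      intro j hj
      rw [Finset.mem_Iio]
      by_contra hji
      exact hi (hdc (le_of_not_gt hji) hj)
    have := Finset.card_le_card hsub
    rw [Fin.card_Iio] at this
    omega

lemma sandwich {N : ℕ} (hN : 0 < N) (g : ProbabilityMeasure ℝ) (s : Fin N → ℝ) {q : ℝ}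
    (hq : 0 ≤ q)
    (hKS : ∀ i : Fin N, (((i : ℕ) : ℝ) + 1) / N - cdfOf g (s i) ≤ q ∧
      cdfOf g (s i) - ((i : ℕ) : ℝ) / N ≤ q)
    (t : ℝ) (m : ℕ) (hmN : m ≤ N) (hiff : ∀ i : Fin N, s i ≤ t ↔ (i : ℕ) < m) :
    (m : ℝ) / N - q ≤ cdfOf g t ∧ cdfOf g t ≤ (m : ℝ) / N + q := by
  have hNR : (0:ℝ) < N := by exact_mod_cast hN
  constructor
  · rcases Nat.eq_zero_or_pos m with hm | hm
    · have := cdfOf_nonneg g t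
      rw [hm]
      simp only [Nat.cast_zero, zero_div]
      linarith
    · set i : Fin N := ⟨m - 1, by omega⟩ with hi
      have hst : s i ≤ t := (hiff i).2 (by simp [hi]; omega)
      have h1 := (hKS i).1
      have hcast : ((i : ℕ) : ℝ) + 1 = m := by
        simp only [hi]
        have : ((m - 1 : ℕ) : ℝ) = (m : ℝ) - 1 := by
          have : (1:ℝ) ≤ (m:ℝ) := by exact_mod_cast hm
          push_cast [Nat.cast_sub hm]
          ring
        rw [this]; ring
      rw [hcast] at h1
      have := cdfOf_mono g hst
      linarith
  · rcases eq_or_lt_of_le hmN with hm | hm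
    · have h1 := cdfOf_le_one g t
      have : (m : ℝ) / N = 1 := by
        rw [hm]; field_simp
      linarith
    · set i : Fin N := ⟨m, hm⟩ with hi
      have hst : ¬ s i ≤ t := fun hc => by
        have := (hiff i).1 hc
        simp [hi] at this
      have hmono := cdfOf_mono g (le_of_lt (lt_of_not_ge hst))
      have h2 := (hKS i).2
      simp only [hi] at h2
      linarith

lemma card_fin_filter {N : ℕ} (p : ℕ → Prop) [DecidablePred p] :
    (Finset.univ.filter (fun k : Fin N => p k)).card = ((Finset.range N).filter p).card := by
  rw [Finset.card_filter, Finset.card_filter,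
    Fin.sum_univ_eq_sum_range (fun k => if p k then 1 else 0)]

lemma slln_cdf {Ω : Type*} [MeasurableSpace Ω] (P : Measure Ω) [IsProbabilityMeasure P]
    (F : ProbabilityMeasure ℝ) (ξ : ℕ → Ω → ℝ) (hξmeas : ∀ i, Measurable (ξ i))
    (hiid : ProbabilityTheory.iIndepFun ξ P)
    (hdist : ∀ i, Measure.map (ξ i) P = F.toMeasure) (q : ℚ) :
    ∀ᵐ ω ∂P, Tendsto
      (fun N => (((Finset.range N).filter (fun k => ξ k ω ≤ (q:ℝ))).card : ℝ) / N)
      atTop (𝓝 (cdfOf F q)) := by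
  classical
  set f : ℝ → ℝ := (Set.Iic (q:ℝ)).indicator 1 with hf
  have hfmeas : Measurable f := measurable_one.indicator measurableSet_Iic
  set X : ℕ → Ω → ℝ := fun k ω => f (ξ k ω) with hX
  have hXind : ∀ k, X k = ((ξ k)⁻¹' (Set.Iic (q:ℝ))).indicator (fun _ => (1:ℝ)) := by
    intro k
    ext ω
    simp only [hX, hf, Set.indicator, Set.mem_preimage, Set.mem_Iic, Pi.one_apply]
  have hint : Integrable (X 0) P := by
    rw [hXind 0]
    exact (integrable_const (1:ℝ)).indicator ((hξmeas 0) measurableSet_Iic)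
  have hindep : Pairwise (Function.onFun (IndepFun · · P) X) := fun i j hij =>
    (hiid.indepFun hij).comp hfmeas hfmeas
  have hident : ∀ i, IdentDistrib (X i) (X 0) P P := by
    intro i
    have hbase : IdentDistrib (ξ i) (ξ 0) P P :=
      ⟨(hξmeas i).aemeasurable, (hξmeas 0).aemeasurable, by rw [hdist i, hdist 0]⟩
    exact hbase.comp hfmeas
  have hmean : P[X 0] = cdfOf F q := by
    show ∫ ω, f (ξ 0 ω) ∂P = _
    rw [← integral_map (hξmeas 0).aemeasurable hfmeas.aestronglyMeasurable, hdist 0, hf,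
      integral_indicator_one measurableSet_Iic]
    rfl
  have hsum : ∀ (ω : Ω) (N : ℕ), (N:ℝ)⁻¹ • (∑ i ∈ Finset.range N, X i ω) =
      (((Finset.range N).filter (fun k => ξ k ω ≤ (q:ℝ))).card : ℝ) / N := by
    intro ω N
    have : ∑ i ∈ Finset.range N, X i ω =
        (((Finset.range N).filter (fun k => ξ k ω ≤ (q:ℝ))).card : ℝ) := by
      rw [← Finset.sum_boole]
      refine Finset.sum_congr rfl fun i _ => ?_
      simp [hX, hf, Set.indicator, Set.mem_Iic]
    rw [this, smul_eq_mul, inv_mul_eq_div]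
  filter_upwards [ProbabilityTheory.strong_law_ae X hint hindep hident] with ω hω
  rw [← hmean]
  have heq : (fun N => (((Finset.range N).filter (fun k => ξ k ω ≤ (q:ℝ))).card : ℝ) / N) =
      fun N : ℕ => (N:ℝ)⁻¹ • (∑ i ∈ Finset.range N, X i ω) := by
    ext N; rw [hsum]
  rw [heq]
  exact hω

end Aux

theorem stmt12 {Ω : Type*} [MeasurableSpace Ω]
    (P : Measure Ω) [IsProbabilityMeasure P]
    (F : ProbabilityMeasure ℝ)
    -- i.i.d. data drawn from `F`
    (ξ : ℕ → Ω → ℝ) (hξmeas : ∀ i, Measurable (ξ i))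
    (hiid : ProbabilityTheory.iIndepFun ξ P)
    (hdist : ∀ i, Measure.map (ξ i) P = F.toMeasure)
    -- the order statistics of the first `N` data points
    (sorted : (N : ℕ) → Ω → Fin N → ℝ)
    (hsortmono : ∀ N ω, Monotone (sorted N ω))
    (hsortperm : ∀ N ω, ∃ σ : Equiv.Perm (Fin N), ∀ i : Fin N,
      sorted N ω i = ξ ((σ i : Fin N) : ℕ) ω)
    -- positive thresholds tending to zero
    (Q : ℕ → ℝ) (hQpos : ∀ N, 0 < Q N) (hQ0 : Tendsto Q atTop (𝓝 0)) :
    ∀ᵐ ω ∂P,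
      -- Kolmogorov–Smirnov
      (∀ G : ℕ → ProbabilityMeasure ℝ,
        (∀ᶠ N in atTop, ∀ i : Fin N,
          (((i : ℕ) : ℝ) + 1) / N - cdfOf (G N) (sorted N ω i) ≤ Q N ∧
          cdfOf (G N) (sorted N ω i) - ((i : ℕ) : ℝ) / N ≤ Q N) →
        Tendsto G atTop (𝓝 F)) ∧
      -- Kuiper
      (∀ G : ℕ → ProbabilityMeasure ℝ,
        (∀ᶠ N in atTop, ∀ i j : Fin N,
          (cdfOf (G N) (sorted N ω i) - ((i : ℕ) : ℝ) / N) +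
            ((((j : ℕ) : ℝ) + 1) / N - cdfOf (G N) (sorted N ω j)) ≤ Q N) →
        Tendsto G atTop (𝓝 F)) := by
  classical
  have hae : ∀ᵐ ω ∂P, ∀ q : ℚ, Tendsto
      (fun N => (((Finset.range N).filter (fun k => ξ k ω ≤ (q:ℝ))).card : ℝ) / N)
      atTop (𝓝 (cdfOf F q)) :=
    ae_all_iff.2 fun q => slln_cdf P F ξ hξmeas hiid hdist q
  filter_upwards [hae] with ω hω
  have main : ∀ G : ℕ → ProbabilityMeasure ℝ,
      (∀ᶠ N in atTop, ∀ i : Fin N,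
        (((i : ℕ) : ℝ) + 1) / N - cdfOf (G N) (sorted N ω i) ≤ Q N ∧
        cdfOf (G N) (sorted N ω i) - ((i : ℕ) : ℝ) / N ≤ Q N) →
      Tendsto G atTop (𝓝 F) := by
    intro G hG
    apply tendsto_of_cdf_rat
    intro q
    set m : ℕ → ℕ := fun N => ((Finset.range N).filter (fun k => ξ k ω ≤ (q:ℝ))).card with hm
    have hbounds : ∀ᶠ N in atTop,
        (m N : ℝ)/N - Q N ≤ cdfOf (G N) q ∧ cdfOf (G N) q ≤ (m N : ℝ)/N + Q N := by
      filter_upwards [hG, eventually_ge_atTop 1] with N hN hN1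
      obtain ⟨σ, hσ⟩ := hsortperm N ω
      have hiff : ∀ i : Fin N, sorted N ω i ≤ (q:ℝ) ↔ (i : ℕ) < m N := by
        intro i
        rw [count_iff (fun k : Fin N => ξ (k : ℕ) ω) (sorted N ω) (hsortmono N ω) σ
          (fun i => hσ i) (q:ℝ) i, hm]
        rw [card_fin_filter (fun k => ξ k ω ≤ (q:ℝ))]
      have hmN : m N ≤ N := le_trans (Finset.card_filter_le _ _) (by simp)
      exact sandwich (by omega) (G N) (sorted N ω) (le_of_lt (hQpos N)) hN (q:ℝ) (m N) hmN hiff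
    have hml : Tendsto (fun N => (m N : ℝ)/N - Q N) atTop (𝓝 (cdfOf F q)) := by
      simpa using (hω q).sub hQ0
    have hmu : Tendsto (fun N => (m N : ℝ)/N + Q N) atTop (𝓝 (cdfOf F q)) := by
      simpa using (hω q).add hQ0
    exact tendsto_of_tendsto_of_tendsto_of_le_of_le' hml hmu
      (hbounds.mono fun N h => h.1) (hbounds.mono fun N h => h.2)
  refine ⟨main, ?_⟩
  intro G hG
  apply main G
  filter_upwards [hG] with N hN i
  have hpos : 0 < N := i.pos
  have hNR : (0:ℝ) < N := by exact_mod_cast hpos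
  set z : Fin N := ⟨0, hpos⟩ with hz
  set l : Fin N := ⟨N - 1, by omega⟩ with hl
  constructor
  · have h1 := hN z i
    have hz0 : cdfOf (G N) (sorted N ω z) - ((z : ℕ) : ℝ) / N ≥ 0 := by
      have := cdfOf_nonneg (G N) (sorted N ω z)
      simp only [hz]
      push_cast
      simpa using this
    linarith
  · have h2 := hN i l
    have hl0 : (((l : ℕ) : ℝ) + 1) / N - cdfOf (G N) (sorted N ω l) ≥ 0 := by
      have hc : ((l : ℕ) : ℝ) + 1 = (N : ℝ) := by
        simp only [hl]
        have : ((N - 1 : ℕ) : ℝ) = (N : ℝ) - 1 := by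
          push_cast [Nat.cast_sub hpos]
          ring
        rw [this]; ring
      rw [hc]
      have := cdfOf_le_one (G N) (sorted N ω l)
      have hdiv : (N:ℝ)/N = 1 := by field_simp
      rw [hdiv]
      linarith
    linarith
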